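/- Assume condition (★) holds for every x ∈ V∪∂V. Then for every increasing function f : {0,1}^{E∪∂E} → ℝ, φ^w_{G;β,q,ĥ}(f) ≤ ℙ(f), where ℙ is the product probability measure on {0,1}^{E∪∂E} under which each edge e ∈ E is independently open with probability p_e = 1 − exp(−qβJ_e) and each edge e ∈ ∂E is open with probability 1. -/

import Mathlib

open Classical Finset

noncomputable section

/-- Two vertices are joined by an open edge of the configuration `ω`. -/
def OpenAdj {V E : Type*} (ends : E → V × V) (ω : E → Bool) (x y : V) : Prop :=
  ∃ e, ω e = true ∧ (ends e = (x, y) ∨ ends e = (y, x))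

/-- `x` and `y` lie in the same open cluster of the configuration `ω`. -/
def ConnIn {V E : Type*} (ends : E → V × V) (ω : E → Bool) (x y : V) : Prop :=
  Relation.ReflTransGen (OpenAdj ends ω) x y

/-- The open cluster of the vertex `x` in the configuration `ω`. -/
def cluster {V E : Type*} [Fintype V] (ends : E → V × V) (ω : E → Bool) (x : V) : Finset V :=
  Finset.univ.filter fun y => ConnIn ends ω x y

/-- The collection of all open clusters of the configuration `ω`
(the vertex sets of the connected components of the open subgraph). -/
def clusters {V E : Type*} [Fintype V] (ends : E → V × V) (ω : E → Bool) :
    Finset (Finset V) :=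
  Finset.univ.image fun x => cluster ends ω x

/-- The free cluster weight `Θ^f[C] = Σ_{m=1}^q exp(β Σ_{x∈C} h_{x,m})`. -/
def thetaF {V : Type*} (q : ℕ) (β : ℝ) (h : V → Fin q → ℝ) (C : Finset V) : ℝ :=
  ∑ m : Fin q, Real.exp (β * ∑ x ∈ C, h x m)

/-- The max-wired cluster weight: `Θ^f[C]` for clusters not touching the boundary `Vb`,
and `exp(β Σ_{x∈C} hmax x)` for clusters touching the boundary. -/
def thetaW {V : Type*} (q : ℕ) (β : ℝ) (h : V → Fin q → ℝ) (hmax : V → ℝ)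
    (Vb : Finset V) (C : Finset V) : ℝ :=
  if C ∩ Vb = ∅ then thetaF q β h C else Real.exp (β * ∑ x ∈ C, hmax x)

/-- The function `g^f(ω) = Π_C Θ^f[C]`, the product over the open clusters of `ω`. -/
def gFree {V E : Type*} [Fintype V] (ends : E → V × V) (q : ℕ) (β : ℝ)
    (h : V → Fin q → ℝ) (ω : E → Bool) : ℝ :=
  ∏ C ∈ clusters ends ω, thetaF q β h C

/-- The function `g^w(ω) = Π_C Θ^w[C]`, the product over the open clusters of `ω`. -/
def gWired {V E : Type*} [Fintype V] (ends : E → V × V) (q : ℕ) (β : ℝ)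
    (h : V → Fin q → ℝ) (hmax : V → ℝ) (Vb : Finset V) (ω : E → Bool) : ℝ :=
  ∏ C ∈ clusters ends ω, thetaW q β h hmax Vb C

/-- The edge factor `Π_e (exp(qβJ_e) − 1)^{ω_e}`. -/
def edgeFactor {E : Type*} [Fintype E] (q : ℕ) (β : ℝ) (J : E → ℝ) (ω : E → Bool) : ℝ :=
  ∏ e : E, if ω e then Real.exp ((q : ℝ) * β * J e) - 1 else 1

/-- The unnormalised weight of the free random-cluster measure. -/
def freeWeight {V E : Type*} [Fintype V] [Fintype E] (ends : E → V × V) (q : ℕ) (β : ℝ)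
    (J : E → ℝ) (h : V → Fin q → ℝ) (ω : E → Bool) : ℝ :=
  edgeFactor q β J ω * gFree ends q β h ω

/-- The expectation `φ^f_{G;β,q,ĥ}(f)` under the free random-cluster measure. -/
def freeExp {V E : Type*} [Fintype V] [Fintype E] (ends : E → V × V) (q : ℕ) (β : ℝ)
    (J : E → ℝ) (h : V → Fin q → ℝ) (f : (E → Bool) → ℝ) : ℝ :=
  (∑ ω : E → Bool, f ω * freeWeight ends q β J h ω) /
    ∑ ω : E → Bool, freeWeight ends q β J h ω

/-- The unnormalised weight of the max-wired random-cluster measure: supported on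
configurations opening all boundary edges `Eb`, with edge factor over interior edges
and cluster weights `Θ^w`. -/
def wiredWeight {V E : Type*} [Fintype V] [Fintype E] (ends : E → V × V) (q : ℕ) (β : ℝ)
    (J : E → ℝ) (h : V → Fin q → ℝ) (hmax : V → ℝ) (Vb : Finset V) (Eb : Finset E)
    (ω : E → Bool) : ℝ :=
  (if ∀ e ∈ Eb, ω e = true then (1 : ℝ) else 0) *
    (∏ e ∈ Ebᶜ, if ω e then Real.exp ((q : ℝ) * β * J e) - 1 else 1) *
    gWired ends q β h hmax Vb ω

/-- The expectation `φ^w_{G;β,q,ĥ}(f)` under the max-wired random-cluster measure. -/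
def wiredExp {V E : Type*} [Fintype V] [Fintype E] (ends : E → V × V) (q : ℕ) (β : ℝ)
    (J : E → ℝ) (h : V → Fin q → ℝ) (hmax : V → ℝ) (Vb : Finset V) (Eb : Finset E)
    (f : (E → Bool) → ℝ) : ℝ :=
  (∑ ω : E → Bool, f ω * wiredWeight ends q β J h hmax Vb Eb ω) /
    ∑ ω : E → Bool, wiredWeight ends q β J h hmax Vb Eb ω

/-- The expectation under the Bernoulli product measure in which each edge `e` is
independently open with probability `p_e = 1 − exp(−qβJ_e)`. -/
def bernExp {E : Type*} [Fintype E] (q : ℕ) (β : ℝ) (J : E → ℝ)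
    (f : (E → Bool) → ℝ) : ℝ :=
  ∑ ω : E → Bool, f ω *
    ∏ e : E, if ω e then 1 - Real.exp (-((q : ℝ) * β * J e))
      else Real.exp (-((q : ℝ) * β * J e))

/-- A function of configurations is increasing for the coordinatewise order. -/
def IncreasingFn {E : Type*} (f : (E → Bool) → ℝ) : Prop :=
  ∀ ⦃ω ω' : E → Bool⦄, (∀ e, ω e ≤ ω' e) → f ω ≤ f ω'

/-- Condition (★): there is a common colour `m*` attaining the maximal field
value `h_{x,max}` at every vertex `x`. -/
def StarCond {V : Type*} (q : ℕ) (h : V → Fin q → ℝ) : Prop :=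
  ∃ m : Fin q, ∀ x k, h x k ≤ h x m

/-- Compatibility of the boundary data: every boundary edge joins an interior vertex to a
boundary vertex, and every interior edge joins two interior vertices (this is the structure
of `E ∪ ∂E` for a finite subgraph `G = (V,E)` of the hypercubic lattice, with `Vb = ∂V`
and `Eb = ∂E`). -/
def BdryCompatible {V E : Type*} (ends : E → V × V) (Vb : Finset V) (Eb : Finset E) : Prop :=
  (∀ e ∈ Eb, ((ends e).1 ∈ Vb ∧ (ends e).2 ∉ Vb) ∨ ((ends e).1 ∉ Vb ∧ (ends e).2 ∈ Vb)) ∧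
    ∀ e ∉ Eb, (ends e).1 ∉ Vb ∧ (ends e).2 ∉ Vb

/-- Indicator of the event `{x ↔ y}`. -/
def connInd {V E : Type*} (ends : E → V × V) (x y : V) (ω : E → Bool) : ℝ :=
  if ConnIn ends ω x y then 1 else 0

/-- Indicator of the event `{x ↔ S}` that some vertex of `S` lies in the open cluster
of `x`. -/
def connToSetInd {V E : Type*} (ends : E → V × V) (x : V) (S : Finset V)
    (ω : E → Bool) : ℝ :=
  if ∃ y ∈ S, ConnIn ends ω x y then 1 else 0


section Conn
variable {V E : Type*} {ends : E → V × V} {ω ω' : E → Bool}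

lemma OpenAdj.symm {x y : V} (h : OpenAdj ends ω x y) : OpenAdj ends ω y x := by
  obtain ⟨e, he, h⟩ := h; exact ⟨e, he, h.symm⟩

lemma ConnIn.refl (x : V) : ConnIn ends ω x x := Relation.ReflTransGen.refl

lemma ConnIn.symm {x y : V} (h : ConnIn ends ω x y) : ConnIn ends ω y x :=
  haveI : Std.Symm (OpenAdj ends ω) := ⟨fun _ _ h => OpenAdj.symm h⟩
  Std.Symm.symm (r := Relation.ReflTransGen (OpenAdj ends ω)) _ _ h

lemma ConnIn.trans {x y z : V} (h : ConnIn ends ω x y) (h' : ConnIn ends ω y z) :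
    ConnIn ends ω x z := Relation.ReflTransGen.trans h h'

lemma ConnIn.mono (hω : ∀ e, ω e ≤ ω' e) {x y : V} (h : ConnIn ends ω x y) :
    ConnIn ends ω' x y := by
  refine Relation.ReflTransGen.mono (fun a b hab => ?_) x y h
  obtain ⟨e, he, hab⟩ := hab
  exact ⟨e, le_antisymm le_top (he ▸ hω e), hab⟩

lemma openAdj_update (e : E) (u v : V) :
    OpenAdj ends (Function.update ω e true) u v ↔
      OpenAdj ends ω u v ∨ (ends e = (u, v) ∨ ends e = (v, u)) := by
  constructor
  · rintro ⟨e', he', hend⟩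
    by_cases h : e' = e
    · subst h; exact Or.inr hend
    · rw [Function.update_of_ne h] at he'
      exact Or.inl ⟨e', he', hend⟩
  · rintro (⟨e', he', hend⟩ | hend)
    · by_cases h : e' = e
      · subst h; exact ⟨e', Function.update_self _ _ _, hend⟩
      · exact ⟨e', by rwa [Function.update_of_ne h], hend⟩
    · exact ⟨e, Function.update_self _ _ _, hend⟩

lemma connIn_update (e : E) (a b : V) :
    ConnIn ends (Function.update ω e true) a b ↔
      ConnIn ends ω a b ∨
        (ConnIn ends ω a (ends e).1 ∧ ConnIn ends ω (ends e).2 b) ∨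
        (ConnIn ends ω a (ends e).2 ∧ ConnIn ends ω (ends e).1 b) := by
  constructor
  · intro h
    induction h with
    | refl => exact Or.inl (ConnIn.refl a)
    | tail hac hstep ih =>
      rename_i c b
      rcases (openAdj_update e c b).1 hstep with hadj | hend | hend
      · rcases ih with h1 | ⟨h1, h2⟩ | ⟨h1, h2⟩
        · exact Or.inl (h1.tail hadj)
        · exact Or.inr (Or.inl ⟨h1, h2.tail hadj⟩)
        · exact Or.inr (Or.inr ⟨h1, h2.tail hadj⟩)
      · -- ends e = (c, b) : so (ends e).1 = c, (ends e).2 = b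
        have h1 : (ends e).1 = c := by rw [hend]
        have h2 : (ends e).2 = b := by rw [hend]
        rcases ih with hh | ⟨hh, _⟩ | ⟨hh, _⟩
        · exact Or.inr (Or.inl ⟨h1 ▸ hh, h2 ▸ ConnIn.refl _⟩)
        · exact Or.inr (Or.inl ⟨hh, h2 ▸ ConnIn.refl _⟩)
        · exact Or.inl (h2 ▸ hh)
      · have h1 : (ends e).1 = b := by rw [hend]
        have h2 : (ends e).2 = c := by rw [hend]
        rcases ih with hh | ⟨hh, _⟩ | ⟨hh, _⟩
        · exact Or.inr (Or.inr ⟨h2 ▸ hh, h1 ▸ ConnIn.refl _⟩)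
        · exact Or.inl (h1 ▸ hh)
        · exact Or.inr (Or.inr ⟨hh, h1 ▸ ConnIn.refl _⟩)
  · have hle : ∀ e', ω e' ≤ Function.update ω e true e' := by
      intro e'
      by_cases h : e' = e
      · subst h; rw [Function.update_self]; exact le_top
      · rw [Function.update_of_ne h]
    have hxy : ConnIn ends (Function.update ω e true) (ends e).1 (ends e).2 :=
      Relation.ReflTransGen.single ⟨e, Function.update_self _ _ _, Or.inl rfl⟩
    rintro (h | ⟨h1, h2⟩ | ⟨h1, h2⟩)
    · exact h.mono hle
    · exact ((h1.mono hle).trans hxy).trans (h2.mono hle)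
    · exact ((h1.mono hle).trans hxy.symm).trans (h2.mono hle)

end Conn

section Clusters
variable {V E : Type*} [Fintype V] {ends : E → V × V} {ω : E → Bool}

lemma mem_cluster {x y : V} : y ∈ cluster ends ω x ↔ ConnIn ends ω x y := by
  simp [cluster]

lemma self_mem_cluster (x : V) : x ∈ cluster ends ω x := mem_cluster.2 (ConnIn.refl x)

lemma cluster_eq_of_conn {x y : V} (h : ConnIn ends ω x y) :
    cluster ends ω x = cluster ends ω y := by
  ext z
  simp only [mem_cluster]
  exact ⟨fun hz => h.symm.trans hz, fun hz => h.trans hz⟩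

lemma cluster_mem_clusters (x : V) : cluster ends ω x ∈ clusters ends ω := by
  simp only [clusters, Finset.mem_image]
  exact ⟨x, Finset.mem_univ x, rfl⟩

lemma clusters_eq_of_conn {e : E} (hxy : ConnIn ends ω (ends e).1 (ends e).2) :
    clusters ends (Function.update ω e true) = clusters ends ω := by
  have hcl : ∀ z, cluster ends (Function.update ω e true) z = cluster ends ω z := by
    intro z
    ext w
    simp only [mem_cluster, connIn_update]
    constructor
    · rintro (h | ⟨h1, h2⟩ | ⟨h1, h2⟩)
      · exact h
      · exact (h1.trans hxy).trans h2
      · exact (h1.trans hxy.symm).trans h2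
    · exact Or.inl
  unfold clusters
  exact Finset.image_congr fun z _ => hcl z

lemma clusters_update {e : E} (hxy : ¬ ConnIn ends ω (ends e).1 (ends e).2) :
    clusters ends (Function.update ω e true) =
      insert (cluster ends ω (ends e).1 ∪ cluster ends ω (ends e).2)
        (((clusters ends ω).erase (cluster ends ω (ends e).1)).erase
          (cluster ends ω (ends e).2)) := by
  set x := (ends e).1
  set y := (ends e).2
  have hclmerge : ∀ z, ConnIn ends ω z x ∨ ConnIn ends ω z y →
      cluster ends (Function.update ω e true) z = cluster ends ω x ∪ cluster ends ω y := by
    intro z hz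
    ext w
    simp only [mem_cluster, Finset.mem_union, connIn_update]
    constructor
    · rintro (h | ⟨h1, h2⟩ | ⟨h1, h2⟩)
      · rcases hz with hz | hz
        · exact Or.inl (hz.symm.trans h)
        · exact Or.inr (hz.symm.trans h)
      · exact Or.inr h2
      · exact Or.inl h2
    · rintro (h | h)
      · rcases hz with hz | hz
        · exact Or.inl (hz.trans h)
        · exact Or.inr (Or.inr ⟨hz, h⟩)
      · rcases hz with hz | hz
        · exact Or.inr (Or.inl ⟨hz, h⟩)
        · exact Or.inl (hz.trans h)
  have hclsame : ∀ z, ¬ ConnIn ends ω z x → ¬ ConnIn ends ω z y →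
      cluster ends (Function.update ω e true) z = cluster ends ω z := by
    intro z hzx hzy
    ext w
    simp only [mem_cluster, connIn_update]
    constructor
    · rintro (h | ⟨h1, h2⟩ | ⟨h1, h2⟩)
      · exact h
      · exact absurd h1 hzx
      · exact absurd h1 hzy
    · exact Or.inl
  ext C
  simp only [clusters, Finset.mem_insert, Finset.mem_erase, Finset.mem_image,
    Finset.mem_univ, true_and]
  constructor
  · rintro ⟨z, rfl⟩
    by_cases hzx : ConnIn ends ω z x
    · exact Or.inl (hclmerge z (Or.inl hzx))
    · by_cases hzy : ConnIn ends ω z y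
      · exact Or.inl (hclmerge z (Or.inr hzy))
      · refine Or.inr ⟨?_, ?_, z, (hclsame z hzx hzy).symm⟩
        · rw [hclsame z hzx hzy]
          intro hcon
          have : y ∈ cluster ends ω z := by rw [hcon]; exact self_mem_cluster y
          exact hzy (mem_cluster.1 this)
        · rw [hclsame z hzx hzy]
          intro hcon
          have : x ∈ cluster ends ω z := by rw [hcon]; exact self_mem_cluster x
          exact hzx (mem_cluster.1 this)
  · rintro (rfl | ⟨hCy, hCx, z, rfl⟩)
    · exact ⟨x, hclmerge x (Or.inl (ConnIn.refl x))⟩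
    · refine ⟨z, hclsame z ?_ ?_⟩
      · intro hzx
        exact hCx (cluster_eq_of_conn hzx.symm).symm
      · intro hzy
        exact hCy (cluster_eq_of_conn hzy.symm).symm

end Clusters

section Theta
variable {V : Type*} {q : ℕ} {β : ℝ} {h : V → Fin q → ℝ} {hmax : V → ℝ} {Vb : Finset V}

lemma thetaF_pos (hq : 2 ≤ q) (β : ℝ) (h : V → Fin q → ℝ) (C : Finset V) :
    0 < thetaF q β h C := by
  have : Nonempty (Fin q) := Fin.pos_iff_nonempty.1 (by omega)
  exact Finset.sum_pos (fun m _ => Real.exp_pos _) Finset.univ_nonempty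

lemma thetaW_pos (hq : 2 ≤ q) (β : ℝ) (h : V → Fin q → ℝ) (hmax : V → ℝ) (Vb : Finset V)
    (C : Finset V) : 0 < thetaW q β h hmax Vb C := by
  unfold thetaW
  split
  · exact thetaF_pos hq β h C
  · exact Real.exp_pos _

lemma exp_hmax_le_thetaF (hq : 2 ≤ q) (β : ℝ) {h : V → Fin q → ℝ} {hmax : V → ℝ}
    (hstar : ∃ m : Fin q, ∀ x, h x m = hmax x) (C : Finset V) :
    Real.exp (β * ∑ x ∈ C, hmax x) ≤ thetaF q β h C := by
  obtain ⟨m, hm⟩ := hstar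
  have : Real.exp (β * ∑ x ∈ C, hmax x) = Real.exp (β * ∑ x ∈ C, h x m) := by
    congr 1
    rw [Finset.sum_congr rfl fun x _ => (hm x).symm]
  rw [this]
  exact Finset.single_le_sum (f := fun m => Real.exp (β * ∑ x ∈ C, h x m))
    (fun m _ => (Real.exp_pos _).le) (Finset.mem_univ m)

lemma thetaF_union_le (hq : 2 ≤ q) (β : ℝ) (h : V → Fin q → ℝ) {A B : Finset V}
    (hd : Disjoint A B) : thetaF q β h (A ∪ B) ≤ thetaF q β h A * thetaF q β h B := by
  unfold thetaF
  rw [Finset.sum_mul]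
  refine Finset.sum_le_sum fun m _ => ?_
  rw [Finset.sum_union hd, mul_add, Real.exp_add]
  exact mul_le_mul_of_nonneg_left
    (Finset.single_le_sum (f := fun k => Real.exp (β * ∑ x ∈ B, h x k))
      (fun k _ => (Real.exp_pos _).le) (Finset.mem_univ m)) (Real.exp_pos _).le

lemma thetaW_union_le (hq : 2 ≤ q) (β : ℝ) {h : V → Fin q → ℝ} {hmax : V → ℝ}
    (hstar : ∃ m : Fin q, ∀ x, h x m = hmax x) (Vb : Finset V) {A B : Finset V}
    (hd : Disjoint A B) :
    thetaW q β h hmax Vb (A ∪ B) ≤ thetaW q β h hmax Vb A * thetaW q β h hmax Vb B := by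
  unfold thetaW
  have hABV : (A ∪ B) ∩ Vb = A ∩ Vb ∪ B ∩ Vb := Finset.union_inter_distrib_right ..
  have hsum : ∑ x ∈ A ∪ B, hmax x = (∑ x ∈ A, hmax x) + ∑ x ∈ B, hmax x :=
    Finset.sum_union hd
  by_cases hA : A ∩ Vb = ∅ <;> by_cases hB : B ∩ Vb = ∅
  · rw [if_pos (by rw [hABV, hA, hB]; simp), if_pos hA, if_pos hB]
    exact thetaF_union_le hq β h hd
  · rw [if_neg (by rw [hABV, hA]; simpa using hB), if_pos hA, if_neg hB, hsum, mul_add,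
      Real.exp_add]
    exact mul_le_mul_of_nonneg_right (exp_hmax_le_thetaF hq β hstar A) (Real.exp_pos _).le
  · rw [if_neg (by rw [hABV, hB]; simpa using hA), if_neg hA, if_pos hB, hsum, mul_add,
      Real.exp_add]
    exact mul_le_mul_of_nonneg_left (exp_hmax_le_thetaF hq β hstar B) (Real.exp_pos _).le
  · rw [if_neg (by rw [hABV]; simp [Finset.union_eq_empty, hA, hB]), if_neg hA, if_neg hB,
      hsum, mul_add, Real.exp_add]

end Theta

section GWired
variable {V E : Type*} [Fintype V] {ends : E → V × V} {q : ℕ} {β : ℝ}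
  {h : V → Fin q → ℝ} {hmax : V → ℝ} {Vb : Finset V}

lemma cluster_disjoint {ω : E → Bool} {x y : V} (hxy : ¬ ConnIn ends ω x y) :
    Disjoint (cluster ends ω x) (cluster ends ω y) := by
  rw [Finset.disjoint_left]
  intro z hzx hzy
  exact hxy ((mem_cluster.1 hzx).trans (mem_cluster.1 hzy).symm)

lemma gWired_update_le (hq : 2 ≤ q) (hstar : ∃ m : Fin q, ∀ x, h x m = hmax x)
    (ω : E → Bool) (e : E) :
    gWired ends q β h hmax Vb (Function.update ω e true) ≤ gWired ends q β h hmax Vb ω := by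
  by_cases hxy : ConnIn ends ω (ends e).1 (ends e).2
  · unfold gWired
    rw [clusters_eq_of_conn hxy]
  · set x := (ends e).1
    set y := (ends e).2
    set Cx := cluster ends ω x with hCx
    set Cy := cluster ends ω y with hCy
    have hne : Cx ≠ Cy := by
      intro hcon
      have : y ∈ Cx := by rw [hcon]; exact self_mem_cluster y
      exact hxy (mem_cluster.1 this)
    have hd : Disjoint Cx Cy := cluster_disjoint hxy
    have hCyx : Cy ∈ (clusters ends ω).erase Cx :=
      Finset.mem_erase.2 ⟨hne.symm, cluster_mem_clusters y⟩
    have hnotmem : Cx ∪ Cy ∉ ((clusters ends ω).erase Cx).erase Cy := by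
      intro hmem
      have h1 := Finset.mem_of_mem_erase (Finset.mem_of_mem_erase hmem)
      simp only [clusters, Finset.mem_image, Finset.mem_univ, true_and] at h1
      obtain ⟨z, hz⟩ := h1
      have hzx : ConnIn ends ω z x := mem_cluster.1
        (by rw [hz]; exact Finset.mem_union_left _ (self_mem_cluster x))
      have hzy : ConnIn ends ω z y := mem_cluster.1
        (by rw [hz]; exact Finset.mem_union_right _ (self_mem_cluster y))
      exact hxy (hzx.symm.trans hzy)
    unfold gWired
    rw [clusters_update hxy, Finset.prod_insert hnotmem]
    have hprod : ∏ C ∈ clusters ends ω, thetaW q β h hmax Vb C =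
        thetaW q β h hmax Vb Cx * (thetaW q β h hmax Vb Cy *
          ∏ C ∈ ((clusters ends ω).erase Cx).erase Cy, thetaW q β h hmax Vb C) := by
      rw [Finset.mul_prod_erase ((clusters ends ω).erase Cx)
          (thetaW q β h hmax Vb) hCyx,
        Finset.mul_prod_erase (clusters ends ω)
          (thetaW q β h hmax Vb) (cluster_mem_clusters x)]
    rw [hprod, ← mul_assoc]
    exact mul_le_mul_of_nonneg_right (thetaW_union_le hq β hstar Vb hd)
      (Finset.prod_nonneg fun C _ => (thetaW_pos hq β h hmax Vb C).le)

lemma gWired_antitone [Fintype E] (hq : 2 ≤ q)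
    (hstar : ∃ m : Fin q, ∀ x, h x m = hmax x)
    {ω ω' : E → Bool} (hle : ∀ e, ω e ≤ ω' e) :
    gWired ends q β h hmax Vb ω' ≤ gWired ends q β h hmax Vb ω := by
  classical
  have key : ∀ n (ω ω' : E → Bool), (∀ e, ω e ≤ ω' e) →
      (Finset.univ.filter fun e => ω e ≠ ω' e).card = n →
      gWired ends q β h hmax Vb ω' ≤ gWired ends q β h hmax Vb ω := by
    intro n
    induction n with
    | zero =>
      intro ω ω' hle hcard
      have hee : ω = ω' := by
        funext e
        by_contra hne
        have hmem : e ∈ Finset.univ.filter fun e => ω e ≠ ω' e := by simp [hne]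
        rw [Finset.card_eq_zero.1 hcard] at hmem
        exact absurd hmem (Finset.notMem_empty e)
      rw [hee]
    | succ n ih =>
      intro ω ω' hle hcard
      have hnonempty : (Finset.univ.filter fun e => ω e ≠ ω' e).Nonempty := by
        rw [← Finset.card_pos, hcard]; omega
      obtain ⟨e, he⟩ := hnonempty
      have hediff : ω e ≠ ω' e := (Finset.mem_filter.1 he).2
      have hωe : ω e = false := by
        by_contra hc
        have h1 : ω e = true := by revert hc; cases ω e <;> simp
        have h2 : ω' e = true := le_antisymm le_top (h1 ▸ hle e)
        exact hediff (h1.trans h2.symm)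
      have hω'e : ω' e = true := by
        by_contra hc
        have h1 : ω' e = false := by revert hc; cases ω' e <;> simp
        exact hediff (hωe.trans h1.symm)
      set ω₁ := Function.update ω e true with hω₁
      have hle1 : ∀ e', ω₁ e' ≤ ω' e' := by
        intro e'
        by_cases h' : e' = e
        · subst h'
          rw [hω₁, Function.update_self, hω'e]
        · rw [hω₁, Function.update_of_ne h']
          exact hle e'
      have hcard1 : (Finset.univ.filter fun e' => ω₁ e' ≠ ω' e').card = n := by
        have hset : (Finset.univ.filter fun e' => ω₁ e' ≠ ω' e') =
            (Finset.univ.filter fun e' => ω e' ≠ ω' e').erase e := by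
          ext e'
          simp only [Finset.mem_filter, Finset.mem_erase, Finset.mem_univ, true_and]
          by_cases h' : e' = e
          · subst h'
            simp [hω₁, Function.update_self, hω'e]
          · simp [hω₁, Function.update_of_ne h', h']
        rw [hset, Finset.card_erase_of_mem he, hcard]
        omega
      calc gWired ends q β h hmax Vb ω' ≤ gWired ends q β h hmax Vb ω₁ :=
            ih ω₁ ω' hle1 hcard1
        _ ≤ gWired ends q β h hmax Vb ω := gWired_update_le hq hstar ω e
  exact key _ ω ω' hle rfl

lemma gWired_pos (hq : 2 ≤ q) (ω : E → Bool) : 0 < gWired ends q β h hmax Vb ω :=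
  Finset.prod_pos fun C _ => thetaW_pos hq β h hmax Vb C

end GWired

/-- under condition (★) on `V ∪ ∂V`, the max-wired random-cluster measure
is dominated, on increasing functions, by the product measure opening each interior edge
independently with probability `p_e = 1 − exp(−qβJ_e)` and each boundary edge with
probability `1`. -/
theorem stmt7 {V E : Type*} [Fintype V] [Fintype E] (ends : E → V × V)
    (Vb : Finset V) (Eb : Finset E) (hbd : BdryCompatible ends Vb Eb)
    (q : ℕ) (hq : 2 ≤ q) (β : ℝ) (hβ : 0 < β)
    (J : E → ℝ) (hJ : ∀ e, 0 ≤ J e)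
    (h : V → Fin q → ℝ) (hmax : V → ℝ)
    (hmaxdef : ∀ x, IsGreatest (Set.range (h x)) (hmax x))
    (hstar : ∃ m : Fin q, ∀ x, h x m = hmax x)
    (f : (E → Bool) → ℝ) (hf : IncreasingFn f) :
    wiredExp ends q β J h hmax Vb Eb f ≤
      ∑ ω : E → Bool, f ω *
        ((if ∀ e ∈ Eb, ω e = true then (1 : ℝ) else 0) *
          ∏ e ∈ Ebᶜ, if ω e then 1 - Real.exp (-((q : ℝ) * β * J e))
            else Real.exp (-((q : ℝ) * β * J e))) := by
  classical
  set g : (E → Bool) → ℝ := gWired ends q β h hmax Vb with hgdef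
  set w : E → Bool → ℝ := fun e b =>
    if e ∈ Eb then (if b then 1 else 0)
    else (if b then 1 - Real.exp (-((q : ℝ) * β * J e))
      else Real.exp (-((q : ℝ) * β * J e))) with hwdef
  set W : (E → Bool) → ℝ := fun ω => ∏ e, w e (ω e) with hWdef
  have hanonneg : ∀ e : E, (0:ℝ) ≤ (q : ℝ) * β * J e := fun e =>
    mul_nonneg (mul_nonneg (by positivity) hβ.le) (hJ e)
  have hw0 : ∀ e b, 0 ≤ w e b := by
    intro e b
    rw [hwdef]
    dsimp only
    split
    · split
      · norm_num
      · exact le_rfl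
    · split
      · rw [sub_nonneg]
        exact Real.exp_le_one_iff.2 (neg_nonpos.2 (hanonneg e))
      · exact (Real.exp_pos _).le
  -- W splits as indicator times Bernoulli factor
  have hWsplit : ∀ ω : E → Bool, W ω =
      (if ∀ e ∈ Eb, ω e = true then (1 : ℝ) else 0) *
        ∏ e ∈ Ebᶜ, (if ω e then 1 - Real.exp (-((q : ℝ) * β * J e))
          else Real.exp (-((q : ℝ) * β * J e))) := by
    intro ω
    rw [hWdef]
    dsimp only
    rw [← Finset.prod_mul_prod_compl Eb (fun e => w e (ω e))]
    congr 1
    · by_cases hall : ∀ e ∈ Eb, ω e = true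
      · rw [if_pos hall]
        refine Finset.prod_eq_one fun e he => ?_
        rw [hwdef]
        simp [he, hall e he]
      · rw [if_neg hall]
        push_neg at hall
        obtain ⟨e0, he0, hne⟩ := hall
        refine Finset.prod_eq_zero he0 ?_
        have hfalse : ω e0 = false := by revert hne; cases ω e0 <;> simp
        rw [hwdef]
        simp [he0, hfalse]
    · refine Finset.prod_congr rfl fun e he => ?_
      rw [hwdef]
      simp [Finset.mem_compl.1 he]
  -- wired weight is a positive constant times W * g
  set c : ℝ := ∏ e ∈ Ebᶜ, Real.exp ((q : ℝ) * β * J e) with hcdef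
  have hc : 0 < c := Finset.prod_pos fun e _ => Real.exp_pos _
  have hwW : ∀ ω : E → Bool, wiredWeight ends q β J h hmax Vb Eb ω =
      c * (W ω * g ω) := by
    intro ω
    unfold wiredWeight
    have hEF : (∏ e ∈ Ebᶜ, if ω e then Real.exp ((q : ℝ) * β * J e) - 1 else 1) =
        c * ∏ e ∈ Ebᶜ, (if ω e then 1 - Real.exp (-((q : ℝ) * β * J e))
          else Real.exp (-((q : ℝ) * β * J e))) := by
      rw [hcdef, ← Finset.prod_mul_distrib]
      refine Finset.prod_congr rfl fun e _ => ?_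
      have hee : Real.exp ((q : ℝ) * β * J e) * Real.exp (-((q : ℝ) * β * J e)) = 1 := by
        rw [← Real.exp_add, add_neg_cancel, Real.exp_zero]
      cases hωe : ω e
      · rw [if_neg (by simp), if_neg (by simp), hee]
      · rw [if_pos rfl, if_pos rfl, mul_sub, mul_one, hee]
    rw [hEF, hWsplit ω, hgdef]
    ring
  -- sums
  set S0 : ℝ := ∑ ω : E → Bool, W ω with hS0def
  set Sg : ℝ := ∑ ω : E → Bool, W ω * g ω with hSgdef
  set Sf : ℝ := ∑ ω : E → Bool, W ω * f ω with hSfdef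
  set Sfg : ℝ := ∑ ω : E → Bool, W ω * (f ω * g ω) with hSfgdef
  have hgpos : ∀ ω : E → Bool, 0 < g ω := fun ω => gWired_pos hq ω
  have hWnonneg : ∀ ω : E → Bool, 0 ≤ W ω := fun ω =>
    Finset.prod_nonneg fun e _ => hw0 e (ω e)
  have hSgpos : 0 < Sg := by
    rw [hSgdef]
    refine Finset.sum_pos' (fun ω _ => mul_nonneg (hWnonneg ω) (hgpos ω).le) ?_
    refine ⟨fun e => decide (e ∈ Eb), Finset.mem_univ _, ?_⟩
    refine mul_pos (Finset.prod_pos fun e _ => ?_) (hgpos _)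
    by_cases he : e ∈ Eb
    · have hd : decide (e ∈ Eb) = true := decide_eq_true he
      rw [hwdef]
      simp only [hd, if_true, he]
      norm_num
    · have hd : decide (e ∈ Eb) = false := decide_eq_false he
      rw [hwdef]
      simp only [hd, if_false, he]
      exact Real.exp_pos _
  -- total mass of the Bernoulli measure is one
  have hS0 : S0 = 1 := by
    rw [hS0def, hWdef]
    dsimp only
    have hpi : ∑ ω ∈ Fintype.piFinset (fun _ : E => (Finset.univ : Finset Bool)),
        ∏ e, w e (ω e) = ∏ e, ∑ b, w e b := Finset.sum_prod_piFinset _ _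
    rw [Fintype.piFinset_univ] at hpi
    rw [hpi]
    refine Finset.prod_eq_one fun e _ => ?_
    have hb : ∑ b, w e b = w e true + w e false := Fintype.sum_bool _
    rw [hb]
    by_cases he : e ∈ Eb
    · have h1 : w e true = 1 := by rw [hwdef]; simp [he]
      have h2 : w e false = 0 := by rw [hwdef]; simp [he]
      rw [h1, h2]
      norm_num
    · have h1 : w e true = 1 - Real.exp (-((q : ℝ) * β * J e)) := by rw [hwdef]; simp [he]
      have h2 : w e false = Real.exp (-((q : ℝ) * β * J e)) := by rw [hwdef]; simp [he]
      rw [h1, h2]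
      ring
  -- numerator and denominator of the wired expectation
  have hnum : ∑ ω : E → Bool, f ω * wiredWeight ends q β J h hmax Vb Eb ω = c * Sfg := by
    rw [hSfgdef, Finset.mul_sum]
    refine Finset.sum_congr rfl fun ω _ => ?_
    rw [hwW ω]
    ring
  have hden : ∑ ω : E → Bool, wiredWeight ends q β J h hmax Vb Eb ω = c * Sg := by
    rw [hSgdef, Finset.mul_sum]
    refine Finset.sum_congr rfl fun ω _ => ?_
    rw [hwW ω]
  have hRHS : ∑ ω : E → Bool, f ω *
      ((if ∀ e ∈ Eb, ω e = true then (1 : ℝ) else 0) *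
        ∏ e ∈ Ebᶜ, if ω e then 1 - Real.exp (-((q : ℝ) * β * J e))
          else Real.exp (-((q : ℝ) * β * J e))) = Sf := by
    rw [hSfdef]
    refine Finset.sum_congr rfl fun ω _ => ?_
    rw [← hWsplit ω]
    ring
  rw [hRHS]
  unfold wiredExp
  rw [hnum, hden, mul_div_mul_left _ _ hc.ne']
  rw [div_le_iff₀ hSgpos]
  -- the FKG inequality
  set ωbot : E → Bool := fun _ => false with hωbotdef
  set f0 : ℝ := f ωbot with hf0def
  set g0 : ℝ := g ωbot with hg0def
  set F : (E → Bool) → ℝ := fun ω => f ω - f0 with hFdef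
  set G : (E → Bool) → ℝ := fun ω => g0 - g ω with hGdef
  have hbotle : ∀ ω : E → Bool, ∀ e, ωbot e ≤ ω e := fun ω e => Bool.false_le _
  have hF0 : (0 : (E → Bool) → ℝ) ≤ F := fun ω => sub_nonneg.2 (hf (hbotle ω))
  have hG0 : (0 : (E → Bool) → ℝ) ≤ G := fun ω =>
    sub_nonneg.2 (gWired_antitone hq hstar (hbotle ω))
  have hFmono : Monotone F := fun σ τ hle => sub_le_sub_right (hf fun e => hle e) _
  have hGmono : Monotone G := fun σ τ hle =>
    sub_le_sub_left (gWired_antitone hq hstar fun e => hle e) _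
  have hμlog : ∀ σ τ : E → Bool, W σ * W τ ≤ W (σ ⊓ τ) * W (σ ⊔ τ) := by
    intro σ τ
    rw [hWdef]
    dsimp only
    rw [← Finset.prod_mul_distrib, ← Finset.prod_mul_distrib]
    refine le_of_eq (Finset.prod_congr rfl fun e _ => ?_)
    have hinf : (σ ⊓ τ) e = σ e ⊓ τ e := rfl
    have hsup : (σ ⊔ τ) e = σ e ⊔ τ e := rfl
    rw [hinf, hsup]
    cases hσ : σ e <;> cases hτ : τ e <;> simp [mul_comm]
  have hfkg := fkg (f := F) (g := G) (μ := W) (fun ω => hWnonneg ω) hF0 hG0 hFmono hGmono hμlog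
  have hE1 : ∑ ω : E → Bool, W ω * F ω = Sf - f0 * S0 := by
    rw [hSfdef, hS0def, Finset.mul_sum, ← Finset.sum_sub_distrib]
    refine Finset.sum_congr rfl fun ω _ => ?_
    rw [hFdef]
    ring
  have hE2 : ∑ ω : E → Bool, W ω * G ω = g0 * S0 - Sg := by
    rw [hSgdef, hS0def, Finset.mul_sum, ← Finset.sum_sub_distrib]
    refine Finset.sum_congr rfl fun ω _ => ?_
    rw [hGdef]
    ring
  have hE3 : ∑ ω : E → Bool, W ω * (F ω * G ω) =
      (g0 * Sf - Sfg) - (f0 * g0 * S0 - f0 * Sg) := by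
    rw [hSfdef, hSfgdef, hS0def, hSgdef, Finset.mul_sum, Finset.mul_sum, Finset.mul_sum,
      ← Finset.sum_sub_distrib, ← Finset.sum_sub_distrib, ← Finset.sum_sub_distrib]
    refine Finset.sum_congr rfl fun ω _ => ?_
    rw [hFdef, hGdef]
    ring
  rw [hE1, hE2, hE3, ← hS0def, hS0] at hfkg
  nlinarith [hfkg]
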